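/- (Lemma C.4, number of near-stationary intervals.) Let n be a nonnegative integer, c > 0, Δ ≥ 0, and l ≥ 2 an integer. Suppose a_1, …, a_{l−1} are positive reals with Σ_{k=1}^{l−1} a_k ≤ 2^n and Σ_{k=1}^{l−1} max{ 1/(2√(a_k)), 2^{−n/4−1} } ≤ c·Δ. Then l ≤ 1 + 2·min{ 2^{n/3}·(c·Δ)^{2/3}, 2^{n/4}·c·Δ }. -/
import Mathlib


/-- (Lemma C.4, number of near-stationary intervals.) If positive reals a_1,…,a_{l-1}
(the interval lengths) satisfy Σ a_k ≤ 2^n and Σ max{1/(2√a_k), 2^{-n/4-1}} ≤ c·Δ, then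
l ≤ 1 + 2·min{2^{n/3}(cΔ)^{2/3}, 2^{n/4} cΔ}. -/
theorem stmt_9 (n : ℕ) (c Δ : ℝ) (hc : 0 < c) (hΔ : 0 ≤ Δ) (l : ℕ) (hl : 2 ≤ l)
    (a : Fin (l - 1) → ℝ) (ha : ∀ k, 0 < a k)
    (hsum : ∑ k, a k ≤ (2 : ℝ) ^ (n : ℝ))
    (hvar : ∑ k, max (1 / (2 * Real.sqrt (a k))) ((2 : ℝ) ^ (-(n : ℝ) / 4 - 1)) ≤ c * Δ) :
    (l : ℝ) ≤ 1 + 2 * min ((2 : ℝ) ^ ((n : ℝ) / 3) * (c * Δ) ^ ((2 : ℝ) / 3))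
      ((2 : ℝ) ^ ((n : ℝ) / 4) * (c * Δ)) := by
  have hm1 : 1 ≤ l - 1 := by omega
  have hlm : (l : ℝ) = ((l - 1 : ℕ) : ℝ) + 1 := by
    rw [Nat.cast_sub (by omega : 1 ≤ l)]; ring
  have hmpos : (0 : ℝ) < ((l - 1 : ℕ) : ℝ) := by exact_mod_cast hm1
  have hsq : ∀ k, 0 < Real.sqrt (a k) := fun k => Real.sqrt_pos.mpr (ha k)
  -- lower bound sum by constant term
  have hA : ((l - 1 : ℕ) : ℝ) * (2 : ℝ) ^ (-(n : ℝ) / 4 - 1) ≤ c * Δ := by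
    calc ((l - 1 : ℕ) : ℝ) * (2 : ℝ) ^ (-(n : ℝ) / 4 - 1)
        = ∑ _k : Fin (l - 1), (2 : ℝ) ^ (-(n : ℝ) / 4 - 1) := by
          rw [Finset.sum_const, Finset.card_univ, Fintype.card_fin, nsmul_eq_mul]
      _ ≤ ∑ k, max (1 / (2 * Real.sqrt (a k))) ((2 : ℝ) ^ (-(n : ℝ) / 4 - 1)) :=
          Finset.sum_le_sum fun k _ => le_max_right _ _
      _ ≤ c * Δ := hvar
  have ht : (0 : ℝ) < (2 : ℝ) ^ (-(n : ℝ) / 4 - 1) := Real.rpow_pos_of_pos two_pos _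
  have hcΔ : 0 < c * Δ := lt_of_lt_of_le (by positivity) hA
  -- bound B : l - 1 ≤ 2 * 2^(n/4) * cΔ
  have hmul : (2 : ℝ) ^ (-(n : ℝ) / 4 - 1) * (2 : ℝ) ^ ((n : ℝ) / 4) = 1 / 2 := by
    rw [← Real.rpow_add two_pos,
      show (-(n : ℝ) / 4 - 1 + (n : ℝ) / 4) = -1 by ring, Real.rpow_neg_one]
    norm_num
  have hu : (0 : ℝ) < (2 : ℝ) ^ ((n : ℝ) / 4) := Real.rpow_pos_of_pos two_pos _
  have hB : ((l - 1 : ℕ) : ℝ) ≤ 2 * ((2 : ℝ) ^ ((n : ℝ) / 4) * (c * Δ)) := by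
    nlinarith [mul_le_mul_of_nonneg_left hA (le_of_lt hu)]
  -- Cauchy–Schwarz part
  have hS₁nn : 0 ≤ ∑ k, Real.sqrt (a k) := Finset.sum_nonneg fun k _ => (hsq k).le
  have hS₂nn : 0 ≤ ∑ k, (Real.sqrt (a k))⁻¹ :=
    Finset.sum_nonneg fun k _ => (inv_nonneg.mpr (hsq k).le)
  have h1 : ∑ k, (Real.sqrt (a k))⁻¹ ≤ 2 * (c * Δ) := by
    have key : (∑ k, (Real.sqrt (a k))⁻¹) / 2 ≤ c * Δ := by
      calc (∑ k, (Real.sqrt (a k))⁻¹) / 2 = ∑ k, 1 / (2 * Real.sqrt (a k)) := by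
            rw [Finset.sum_div]
            refine Finset.sum_congr rfl fun k _ => ?_
            rw [one_div, mul_inv]; ring
        _ ≤ ∑ k, max (1 / (2 * Real.sqrt (a k))) ((2 : ℝ) ^ (-(n : ℝ) / 4 - 1)) :=
            Finset.sum_le_sum fun k _ => le_max_left _ _
        _ ≤ c * Δ := hvar
    linarith
  have h3 : (((l - 1 : ℕ) : ℝ)) ^ 2 ≤ (∑ k, Real.sqrt (a k)) * ∑ k, (Real.sqrt (a k))⁻¹ := by
    have cs := Finset.sum_mul_sq_le_sq_mul_sq Finset.univ
      (fun k : Fin (l - 1) => Real.sqrt (Real.sqrt (a k)))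
      (fun k : Fin (l - 1) => (Real.sqrt (Real.sqrt (a k)))⁻¹)
    have e1 : ∀ k : Fin (l - 1), Real.sqrt (Real.sqrt (a k)) * (Real.sqrt (Real.sqrt (a k)))⁻¹
        = 1 := fun k => mul_inv_cancel₀ (ne_of_gt (Real.sqrt_pos.mpr (hsq k)))
    have e2 : ∀ k : Fin (l - 1), (Real.sqrt (Real.sqrt (a k))) ^ 2 = Real.sqrt (a k) :=
      fun k => Real.sq_sqrt (hsq k).le
    have e3 : ∀ k : Fin (l - 1), ((Real.sqrt (Real.sqrt (a k)))⁻¹) ^ 2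
        = (Real.sqrt (a k))⁻¹ := by
      intro k; rw [inv_pow, e2 k]
    simp only [e1, e2, e3, Finset.sum_const, Finset.card_univ, Fintype.card_fin,
      nsmul_eq_mul, mul_one] at cs
    exact_mod_cast cs
  have h4 : (∑ k, Real.sqrt (a k)) ^ 2 ≤ (2 : ℝ) ^ (n : ℝ) * ((l - 1 : ℕ) : ℝ) := by
    have cs := Finset.sum_mul_sq_le_sq_mul_sq Finset.univ
      (fun k : Fin (l - 1) => Real.sqrt (a k)) (fun _ : Fin (l - 1) => (1 : ℝ))
    simp only [mul_one, one_pow, Finset.sum_const, Finset.card_univ, Fintype.card_fin,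
      nsmul_eq_mul] at cs
    have e2 : ∀ k : Fin (l - 1), (Real.sqrt (a k)) ^ 2 = a k := fun k => Real.sq_sqrt (ha k).le
    simp only [e2] at cs
    calc (∑ k, Real.sqrt (a k)) ^ 2 ≤ (∑ k, a k) * ((l - 1 : ℕ) : ℝ) := cs
      _ ≤ (2 : ℝ) ^ (n : ℝ) * ((l - 1 : ℕ) : ℝ) := mul_le_mul_of_nonneg_right hsum hmpos.le
  have hcube : (((l - 1 : ℕ) : ℝ)) ^ 3 ≤ 8 * (2 : ℝ) ^ (n : ℝ) * (c * Δ) ^ 2 := by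
    have h5 : ((((l - 1 : ℕ) : ℝ)) ^ 2) ^ 2
        ≤ ((∑ k, Real.sqrt (a k)) * ∑ k, (Real.sqrt (a k))⁻¹) ^ 2 :=
      pow_le_pow_left₀ (sq_nonneg _) h3 2
    have h7 : (∑ k, (Real.sqrt (a k))⁻¹) ^ 2 ≤ (2 * (c * Δ)) ^ 2 :=
      pow_le_pow_left₀ hS₂nn h1 2
    have h8 : (∑ k, Real.sqrt (a k)) ^ 2 * (∑ k, (Real.sqrt (a k))⁻¹) ^ 2
        ≤ ((2 : ℝ) ^ (n : ℝ) * ((l - 1 : ℕ) : ℝ)) * (2 * (c * Δ)) ^ 2 :=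
      mul_le_mul h4 h7 (sq_nonneg _) (by positivity)
    have h9 : (((l - 1 : ℕ) : ℝ)) ^ 3 * ((l - 1 : ℕ) : ℝ)
        ≤ (8 * (2 : ℝ) ^ (n : ℝ) * (c * Δ) ^ 2) * ((l - 1 : ℕ) : ℝ) := by
      nlinarith [mul_pow (∑ k, Real.sqrt (a k)) (∑ k, (Real.sqrt (a k))⁻¹) 2]
    exact le_of_mul_le_mul_right h9 hmpos
  have hC : ((l - 1 : ℕ) : ℝ) ≤ 2 * ((2 : ℝ) ^ ((n : ℝ) / 3) * (c * Δ) ^ ((2 : ℝ) / 3)) := by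
    have hX : ((2 : ℝ) ^ ((n : ℝ) / 3)) ^ (3 : ℕ) = (2 : ℝ) ^ (n : ℝ) := by
      rw [← Real.rpow_natCast ((2:ℝ) ^ ((n:ℝ)/3)) 3, ← Real.rpow_mul (by norm_num : (0:ℝ) ≤ 2)]
      norm_num
    have hY : ((c * Δ) ^ ((2 : ℝ) / 3)) ^ (3 : ℕ) = (c * Δ) ^ 2 := by
      rw [← Real.rpow_natCast ((c*Δ) ^ ((2:ℝ)/3)) 3, ← Real.rpow_mul hcΔ.le]
      norm_num
    have hRnn : 0 ≤ 2 * ((2 : ℝ) ^ ((n : ℝ) / 3) * (c * Δ) ^ ((2 : ℝ) / 3)) := by positivity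
    refine le_of_pow_le_pow_left₀ (n := 3) (by norm_num) hRnn ?_
    calc (((l - 1 : ℕ) : ℝ)) ^ 3 ≤ 8 * (2 : ℝ) ^ (n : ℝ) * (c * Δ) ^ 2 := hcube
      _ = (2 * ((2 : ℝ) ^ ((n : ℝ) / 3) * (c * Δ) ^ ((2 : ℝ) / 3))) ^ 3 := by
          rw [mul_pow 2 ((2:ℝ)^((n:ℝ)/3) * (c*Δ)^((2:ℝ)/3)) 3,
            mul_pow ((2:ℝ)^((n:ℝ)/3)) ((c*Δ)^((2:ℝ)/3)) 3, hX, hY]; ring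
  -- conclude
  rw [hlm]
  rcases le_total ((2 : ℝ) ^ ((n : ℝ) / 3) * (c * Δ) ^ ((2 : ℝ) / 3))
      ((2 : ℝ) ^ ((n : ℝ) / 4) * (c * Δ)) with h | h
  · rw [min_eq_left h]; linarith
  · rw [min_eq_right h]; linarith
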